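/- Let A and B be rings and M an (A,B)-bimodule that is finitely generated projective as a right B-module, with E = End_B(M) the endomorphism ring of M_B and i_M : A → E the ring map a ↦ (m ↦ am). Then M is totally faithful as a left A-module (i.e., for every right A-module X the map X → Hom_B(M, X ⊗_A M), x ↦ (m ↦ x ⊗ m), is injective) if and only if i_M is a pure morphism of left A-modules. -/

import Mathlib

open scoped TensorProduct
open MulOpposite

/-- The subgroup of `L ⊗[ℤ] M` by which one quotients to obtain the tensor product
`L ⊗[A] M` of a right `A`-module `L` and a left `A`-module `M` over a
(not necessarily commutative) ring `A`. -/
noncomputable def NCrel (A : Type) [Ring A] (L M : Type) [AddCommGroup L]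
    [AddCommGroup M] [Module Aᵐᵒᵖ L] [Module A M] : AddSubgroup (L ⊗[ℤ] M) :=
  AddSubgroup.closure
    {x | ∃ (l : L) (a : A) (m : M), x = (op a • l) ⊗ₜ[ℤ] m - l ⊗ₜ[ℤ] (a • m)}

/-- The tensor product `L ⊗[A] M` over a (not necessarily commutative) ring `A` of a
right `A`-module `L` and a left `A`-module `M`, as an abelian group. -/
abbrev NCT (A : Type) [Ring A] (L M : Type) [AddCommGroup L] [AddCommGroup M]
    [Module Aᵐᵒᵖ L] [Module A M] : Type :=
  (L ⊗[ℤ] M) ⧸ NCrel A L M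

/-- The elementary tensor `l ⊗ m` in `L ⊗[A] M`. -/
noncomputable def NCT.tmul (A : Type) [Ring A] {L M : Type} [AddCommGroup L]
    [AddCommGroup M] [Module Aᵐᵒᵖ L] [Module A M] (l : L) (m : M) : NCT A L M :=
  QuotientAddGroup.mk (l ⊗ₜ[ℤ] m)

/-- The map `L ⊗[A] f : L ⊗[A] M → L ⊗[A] N` induced by a morphism `f : M → N` of left
`A`-modules. -/
noncomputable def NCT.mapRight (A : Type) [Ring A] (L : Type) [AddCommGroup L]
    [Module Aᵐᵒᵖ L] {M N : Type} [AddCommGroup M] [AddCommGroup N] [Module A M]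
    [Module A N] (f : M →+ N) (hf : ∀ (a : A) (m : M), f (a • m) = a • f m) :
    NCT A L M →+ NCT A L N :=
  QuotientAddGroup.map _ _
    (TensorProduct.map LinearMap.id f.toIntLinearMap).toAddMonoidHom
    (by
      refine (AddSubgroup.closure_le _).mpr ?_
      rintro x ⟨l, a, m, rfl⟩
      simp only [SetLike.mem_coe, AddSubgroup.mem_comap, map_sub,
        LinearMap.toAddMonoidHom_coe, TensorProduct.map_tmul, LinearMap.id_coe, id_eq,
        AddMonoidHom.coe_toIntLinearMap]
      exact AddSubgroup.subset_closure ⟨l, a, f m, by rw [hf]⟩)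

/-- The map `f ⊗[A] M : L ⊗[A] M → L' ⊗[A] M` induced by a morphism `f : L → L'` of
right `A`-modules. -/
noncomputable def NCT.mapLeft (A : Type) [Ring A] {L L' : Type} [AddCommGroup L]
    [AddCommGroup L'] [Module Aᵐᵒᵖ L] [Module Aᵐᵒᵖ L'] (M : Type) [AddCommGroup M]
    [Module A M] (f : L →+ L') (hf : ∀ (a : Aᵐᵒᵖ) (l : L), f (a • l) = a • f l) :
    NCT A L M →+ NCT A L' M :=
  QuotientAddGroup.map _ _
    (TensorProduct.map f.toIntLinearMap LinearMap.id).toAddMonoidHom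
    (by
      refine (AddSubgroup.closure_le _).mpr ?_
      rintro x ⟨l, a, m, rfl⟩
      simp only [SetLike.mem_coe, AddSubgroup.mem_comap, map_sub,
        LinearMap.toAddMonoidHom_coe, TensorProduct.map_tmul, LinearMap.id_coe, id_eq,
        AddMonoidHom.coe_toIntLinearMap]
      exact AddSubgroup.subset_closure ⟨f l, a, m, by rw [hf]⟩)

/-- `i : A → B` is a pure morphism of left `A`-modules: for every right `A`-module `L`,
the map `L ⊗[A] i : L ⊗[A] A → L ⊗[A] B` is injective.  Here `B` is a left `A`-module
via `i`. -/
noncomputable def RingHom.LeftPure {A B : Type} [Ring A] [Ring B] (i : A →+* B) :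
    Prop :=
  ∀ (L : Type) (_ : AddCommGroup L) (_ : Module Aᵐᵒᵖ L),
    letI : Module A B := Module.compHom B i
    Function.Injective
      (NCT.mapRight A L (M := A) (N := B) i.toAddMonoidHom
        (fun a m => show i (a * m) = i a * i m from map_mul i a m))

/-- `i : A → B` is a pure morphism of right `A`-modules: for every left `A`-module `L`,
the map `i ⊗[A] L : A ⊗[A] L → B ⊗[A] L` is injective.  Here `B` is a right `A`-module
via `i`. -/
noncomputable def RingHom.RightPure {A B : Type} [Ring A] [Ring B] (i : A →+* B) :
    Prop :=
  ∀ (L : Type) (_ : AddCommGroup L) (_ : Module A L),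
    letI : Module Aᵐᵒᵖ B := Module.compHom B (RingHom.op i)
    Function.Injective
      (NCT.mapLeft A (L := A) (L' := B) L i.toAddMonoidHom
        (fun a l => show i (l * a.unop) = i l * i a.unop from map_mul i l a.unop))
section Aux
variable (A : Type) [Ring A] {L M N : Type} [AddCommGroup L] [AddCommGroup M]
  [AddCommGroup N] [Module Aᵐᵒᵖ L] [Module A M] [Module A N]

lemma NCT.tmul_rel (l : L) (a : A) (m : M) :
    NCT.tmul A (op a • l) m = NCT.tmul A l (a • m) := by
  unfold NCT.tmul
  rw [QuotientAddGroup.eq]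
  have : -((op a • l) ⊗ₜ[ℤ] m) + l ⊗ₜ[ℤ] (a • m)
      = -((op a • l) ⊗ₜ[ℤ] m - l ⊗ₜ[ℤ] (a • m)) := by abel
  rw [this]
  exact neg_mem (AddSubgroup.subset_closure ⟨l, a, m, rfl⟩)

lemma NCT.tmul_zero_left (m : M) : NCT.tmul A (0 : L) m = 0 := by
  unfold NCT.tmul; rw [TensorProduct.zero_tmul]; rfl

lemma NCT.tmul_add_left (l l' : L) (m : M) :
    NCT.tmul A (l + l') m = NCT.tmul A l m + NCT.tmul A l' m := by
  unfold NCT.tmul; rw [TensorProduct.add_tmul]; rfl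

lemma NCT.tmul_sub_left (l l' : L) (m : M) :
    NCT.tmul A (l - l') m = NCT.tmul A l m - NCT.tmul A l' m := by
  unfold NCT.tmul; rw [TensorProduct.sub_tmul]; rfl

lemma NCT.tmul_add_right (l : L) (m m' : M) :
    NCT.tmul A l (m + m') = NCT.tmul A l m + NCT.tmul A l m' := by
  unfold NCT.tmul; rw [TensorProduct.tmul_add]; rfl

lemma NCT.tmul_sum_right {ι : Type*} (s : Finset ι) (l : L) (v : ι → M) :
    NCT.tmul A l (∑ j ∈ s, v j) = ∑ j ∈ s, NCT.tmul A l (v j) :=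
  map_sum (AddMonoidHom.mk' (NCT.tmul A l) (NCT.tmul_add_right A l)) v s

lemma NCT.mapRight_tmul (f : M →+ N) (hf : ∀ (a : A) (m : M), f (a • m) = a • f m)
    (l : L) (m : M) :
    NCT.mapRight A L f hf (NCT.tmul A l m) = NCT.tmul A l (f m) := rfl

/-- Contraction `L ⊗[A] A → L`, `l ⊗ a ↦ l • a`. -/
noncomputable def NCT.contract : NCT A L A →+ L :=
  QuotientAddGroup.lift _
    (TensorProduct.liftAddHom
      (AddMonoidHom.mk' (fun l => AddMonoidHom.mk' (fun a : A => op a • l)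
        (fun a b => by simp [add_smul]))
        (fun l l' => by ext a; simp [smul_add]))
      (fun z l a => by simp only [AddMonoidHom.mk'_apply, op_smul, smul_assoc]; rw [smul_comm]))
    (by
      intro x hx
      refine (AddSubgroup.closure_le (AddMonoidHom.ker _)).mpr ?_ hx
      rintro y ⟨l, a, b, rfl⟩
      simp only [SetLike.mem_coe, AddMonoidHom.mem_ker, map_sub, TensorProduct.liftAddHom_tmul, AddMonoidHom.mk'_apply, smul_eq_mul, op_mul, mul_smul, sub_self])

lemma NCT.contract_tmul (l : L) (a : A) :
    NCT.contract A (NCT.tmul A l a) = op a • l := rfl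

lemma NCT.tmul_contract (t : NCT A L A) :
    NCT.tmul A (NCT.contract A t) (1 : A) = t := by
  refine QuotientAddGroup.induction_on t ?_
  intro z
  induction z using TensorProduct.induction_on with
  | zero => rw [show ((QuotientAddGroup.mk 0 : NCT A L A)) = 0 from rfl,
      map_zero, NCT.tmul_zero_left]
  | tmul l a =>
      rw [show (QuotientAddGroup.mk (l ⊗ₜ[ℤ] a) : NCT A L A) = NCT.tmul A l a from rfl,
        NCT.contract_tmul, NCT.tmul_rel]
      simp [smul_eq_mul]
  | add x y hx hy =>
      rw [show (QuotientAddGroup.mk (x + y) : NCT A L A)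
          = QuotientAddGroup.mk x + QuotientAddGroup.mk y from rfl,
        map_add, NCT.tmul_add_left, hx, hy]

end Aux


/-- Let `A` and `B` be rings and `M` an `(A,B)`-bimodule that is
finitely generated projective as a right `B`-module, with `E = End_B(M)` the
endomorphism ring of `M_B` and `i_M : A → E`, `a ↦ (m ↦ a • m)`, the canonical ring
homomorphism.  Then `M` is totally faithful as a left `A`-module (for every right
`A`-module `X`, the map `X → Hom_B(M, X ⊗[A] M)`, `x ↦ (m ↦ x ⊗ m)`, is injective) if
and only if `i_M` is a pure morphism of left `A`-modules.  (Right modules are encoded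
as modules over the opposite ring.) -/
theorem stmt15 {A B : Type} [Ring A] [Ring B]
    (M : Type) [AddCommGroup M] [Module A M] [Module Bᵐᵒᵖ M] [SMulCommClass A Bᵐᵒᵖ M]
    [Module.Finite Bᵐᵒᵖ M] [Module.Projective Bᵐᵒᵖ M] :
    (∀ (X : Type) (_ : AddCommGroup X) (_ : Module Aᵐᵒᵖ X),
      Function.Injective (fun x : X => (fun m : M => NCT.tmul A x m))) ↔
    (Module.toModuleEnd Bᵐᵒᵖ M : A →+* Module.End Bᵐᵒᵖ M).LeftPure := by
  set E := Module.End Bᵐᵒᵖ M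
  set i : A →+* E := Module.toModuleEnd Bᵐᵒᵖ M with hi
  letI : Module A E := Module.compHom E i
  have hsmul : ∀ (a : A) (e : E) (m : M), (a • e) m = a • (e m) := fun a e m => rfl
  constructor
  · -- totally faithful → pure
    intro h L _ _
    rw [injective_iff_map_eq_zero]
    intro t ht
    set x := NCT.contract A t with hx
    have htx : t = NCT.tmul A x (1 : A) := (NCT.tmul_contract A t).symm
    have h1E : NCT.tmul A x (1 : E) = 0 := by
      have := ht
      rw [htx, NCT.mapRight_tmul] at this
      simpa using this
    have h2 : ∀ m : M, NCT.tmul A x m = 0 := by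
      intro m
      have := congrArg (NCT.mapRight A L (M := E) (N := M)
        (AddMonoidHom.mk' (fun e : E => e m) (fun e e' => rfl))
        (fun a e => hsmul a e m)) h1E
      erw [NCT.mapRight_tmul, map_zero] at this
      exact this
    have hx0 : x = 0 := by
      apply h L ‹_› ‹_›
      funext m
      simp only [h2 m, NCT.tmul_zero_left]
    rw [htx, hx0, NCT.tmul_zero_left]
  · -- pure → totally faithful
    intro hp X _ _
    intro x x' hxx'
    set y := x - x' with hy
    have hym : ∀ m : M, NCT.tmul A y m = 0 := by
      intro m
      have h : NCT.tmul A x m = NCT.tmul A x' m := congrFun hxx' m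
      rw [hy, NCT.tmul_sub_left, h, sub_self]
    -- dual basis
    obtain ⟨n, f, g, -, -, hfg⟩ :=
      Module.Finite.exists_comp_eq_id_of_projective Bᵐᵒᵖ M
    -- the "rank one" endomorphism  m' ↦ (g m' j) • m0
    let Θ : Fin n → M →+ E := fun j =>
      { toFun := fun m0 =>
          { toFun := fun m' => g m' j • m0
            map_add' := fun m' m'' => by simp [add_smul]
            map_smul' := fun b m' => by simp [mul_smul] }
        map_zero' := by ext m'; simp [LinearMap.add_apply]
        map_add' := fun m0 m0' => by ext m'; exact smul_add (g m' j) m0 m0' }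
    have hΘ : ∀ (j : Fin n) (a : A) (m0 : M), Θ j (a • m0) = a • Θ j m0 := by
      intro j a m0
      ext m'
      rw [hsmul]
      exact (smul_comm a (g m' j) m0).symm
    have hone : (1 : E) = ∑ j : Fin n, Θ j (f (Pi.single j 1)) := by
      ext m'
      have h1 : ∀ j : Fin n, g m' j • f (Pi.single j (1 : Bᵐᵒᵖ))
          = f (Pi.single j (g m' j)) := by
        intro j
        rw [← map_smul]
        congr 1
        ext k
        by_cases hk : k = j
        · subst hk; simp
        · simp [Pi.single_eq_of_ne hk]
      calc (1 : E) m' = (f ∘ₗ g) m' := by rw [hfg]; rfl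
        _ = f (g m') := rfl
        _ = ∑ j : Fin n, g m' j • f (Pi.single j (1 : Bᵐᵒᵖ)) := by
            simp only [h1, ← map_sum]
            congr 1
            exact (Finset.univ_sum_single (g m')).symm
        _ = (∑ j : Fin n, Θ j (f (Pi.single j 1))) m' := by
            rw [LinearMap.sum_apply]
            rfl
    have h1E : NCT.tmul A y (1 : E) = 0 := by
      rw [hone, NCT.tmul_sum_right]
      refine Finset.sum_eq_zero fun j _ => ?_
      have h := congrArg (NCT.mapRight A X (M := M) (N := E) (Θ j) (hΘ j))
        (hym (f (Pi.single j 1)))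
      rwa [NCT.mapRight_tmul, map_zero] at h
    have hA : NCT.tmul A y (1 : A) = 0 := by
      have hinj := hp X ‹AddCommGroup X› ‹Module Aᵐᵒᵖ X›
      refine hinj ?_
      rw [map_zero, NCT.mapRight_tmul,
        show i.toAddMonoidHom (1 : A) = (1 : E) from map_one i]
      exact h1E
    have hy0 : y = 0 := by
      have h := congrArg (NCT.contract A) hA
      rwa [NCT.contract_tmul, map_zero, op_one, one_smul] at h
    rw [hy] at hy0
    exact sub_eq_zero.mp hy0
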